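/- Let H : [z₀, ∞) → (0,∞) be a C² function which is strictly decreasing, integrable at infinity, and satisfies lim_{z→∞} H(z)²/H'(z) = 0 and lim_{z→∞} H(z)H''(z)/(H'(z))² = a for some real a ≠ 2. Then lim_{z→∞} (∫_z^∞ H(y) dy) / (H(z)²/(-H'(z))) = 1/(2 - a). -/

import Mathlib

open MeasureTheory Real Filter
open Topology

/-- L'Hôpital-type lemma: if H > 0 is C², strictly decreasing, integrable at ∞,
H²/H' → 0 and H·H''/(H')² → a ≠ 2, then
(∫_z^∞ H)/(H(z)²/(-H'(z))) → 1/(2-a). -/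
theorem lhopital_tail_integral
    (H : ℝ → ℝ) (z₀ a : ℝ) (ha : a ≠ 2)
    (hpos : ∀ z ∈ Set.Ici z₀, 0 < H z)
    (hanti : StrictAntiOn H (Set.Ici z₀))
    (hC2 : ContDiffOn ℝ 2 H (Set.Ici z₀))
    (hint : IntegrableOn H (Set.Ici z₀))
    (h1 : Tendsto (fun z => H z ^ 2 / deriv H z) atTop (nhds 0))
    (h2 : Tendsto (fun z => H z * deriv (deriv H) z / (deriv H z) ^ 2)
        atTop (nhds a)) :
    Tendsto (fun z => (∫ y in Set.Ioi z, H y) / (H z ^ 2 / (-(deriv H z))))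
      atTop (nhds (1 / (2 - a))) := by
  have hopen : IsOpen (Set.Ioi z₀) := isOpen_Ioi
  have hC2' : ContDiffOn ℝ 2 H (Set.Ioi z₀) := hC2.mono Set.Ioi_subset_Ici_self
  have hH'cd : ContDiffOn ℝ 1 (deriv H) (Set.Ioi z₀) :=
    hC2'.deriv_of_isOpen hopen (by norm_num)
  have hHd : ∀ z ∈ Set.Ioi z₀, HasDerivAt H (deriv H z) z := fun z hz =>
    ((hC2'.differentiableOn two_ne_zero).differentiableAt (hopen.mem_nhds hz)).hasDerivAt
  have hH'd : ∀ z ∈ Set.Ioi z₀, HasDerivAt (deriv H) (deriv (deriv H) z) z := fun z hz =>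
    ((hH'cd.differentiableOn one_ne_zero).differentiableAt (hopen.mem_nhds hz)).hasDerivAt
  have hH'cont : ContinuousOn (deriv H) (Set.Ioi z₀) := hH'cd.continuousOn
  -- the derivative is nonpositive on the interior
  have hH'le : ∀ z ∈ Set.Ioi z₀, deriv H z ≤ 0 := by
    intro z hz
    have hslope : Tendsto (slope H z) (𝓝[>] z) (𝓝 (deriv H z)) :=
      ((hasDerivAt_iff_tendsto_slope.1 (hHd z hz)).mono_left
        (nhdsWithin_mono z fun y hy => ne_of_gt hy))
    refine le_of_tendsto hslope ?_
    filter_upwards [self_mem_nhdsWithin] with y hy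
    have hyz : z < y := hy
    have hlt : H y < H z := hanti (Set.mem_Ici.2 (le_of_lt hz)) (Set.mem_Ici.2 (le_of_lt (hz.trans hyz))) hyz
    rw [slope_def_field]
    exact div_nonpos_of_nonpos_of_nonneg (by linarith) (by linarith)
  -- if H' vanishes at an interior point, so does H''
  have hH''zero : ∀ z ∈ Set.Ioi z₀, deriv H z = 0 → deriv (deriv H) z = 0 := by
    intro z hz h0
    have : IsLocalMax (deriv H) z := by
      filter_upwards [hopen.mem_nhds hz] with y hy
      rw [h0]; exact hH'le y hy
    exact this.deriv_eq_zero
  -- a bound |H·H''| ≤ C·(H')² for large z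
  set C : ℝ := |a| + 1 with hC
  have hCpos : 0 < C := by positivity
  obtain ⟨z₁', hz₁'⟩ := Metric.tendsto_atTop.1 h2 1 one_pos
  set z₁ : ℝ := max z₁' (z₀ + 1) with hz₁def
  have hz₁gt : z₀ < z₁ := lt_of_lt_of_le (by linarith) (le_max_right _ _)
  have hbound : ∀ z ≥ z₁, |H z * deriv (deriv H) z| ≤ C * (deriv H z) ^ 2 := by
    intro z hz
    have hzz₀ : z ∈ Set.Ioi z₀ := lt_of_lt_of_le hz₁gt hz
    by_cases h0 : deriv H z = 0
    · simp [h0, hH''zero z hzz₀ h0]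
    · have h := hz₁' z (le_trans (le_max_left _ _) hz)
      rw [Real.dist_eq] at h
      have habs : |H z * deriv (deriv H) z / (deriv H z) ^ 2| < C := by
        calc |H z * deriv (deriv H) z / (deriv H z) ^ 2|
            = |(H z * deriv (deriv H) z / (deriv H z) ^ 2 - a) + a| := by ring_nf
          _ ≤ |H z * deriv (deriv H) z / (deriv H z) ^ 2 - a| + |a| := abs_add_le _ _
          _ < C := by rw [hC]; linarith
      have hsq : (0:ℝ) < (deriv H z) ^ 2 := by positivity
      rw [abs_div, abs_of_nonneg hsq.le] at habs
      exact le_of_lt ((div_lt_iff₀ hsq).1 habs)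
  -- H' is strictly negative for large z
  have hneg : ∀ z ≥ z₁ + 1, deriv H z < 0 := by
    have hsub : Set.Icc z₁ (z₁ + 1) ⊆ Set.Ici z₀ := fun x hx => le_trans hz₁gt.le hx.1
    obtain ⟨c, hc, hcderiv⟩ := exists_hasDerivAt_eq_slope H (deriv H)
      (by linarith : z₁ < z₁ + 1) (hC2.continuousOn.mono hsub)
      (fun x hx => hHd x (lt_trans hz₁gt hx.1))
    have hcz₀ : z₀ < c := lt_trans hz₁gt hc.1
    have hcneg : deriv H c < 0 := by
      rw [hcderiv]
      have hlt : H (z₁ + 1) < H z₁ :=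
        hanti hz₁gt.le (by simp only [Set.mem_Ici]; linarith) (by linarith)
      have : z₁ + 1 - z₁ = (1:ℝ) := by ring
      rw [this, div_one]
      linarith
    have hmain : ∀ z ≥ c, deriv H z < 0 := by
      by_contra hcon
      push_neg at hcon
      obtain ⟨p₀, hp₀c, hp₀⟩ := hcon
      have hp₀z₀ : p₀ ∈ Set.Ioi z₀ := lt_of_lt_of_le hcz₀ hp₀c
      set S : Set ℝ := Set.Ici c ∩ deriv H ⁻¹' {0} with hSdef
      have hSne : S.Nonempty := ⟨p₀, hp₀c, le_antisymm (hH'le p₀ hp₀z₀) hp₀⟩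
      have hSclosed : IsClosed S := by
        have hsub2 : Set.Ici c ⊆ Set.Ioi z₀ := fun x hx => lt_of_lt_of_le hcz₀ hx
        exact (hH'cont.mono hsub2).preimage_isClosed_of_isClosed isClosed_Ici
          isClosed_singleton
      have hSbdd : BddBelow S := ⟨c, fun x hx => hx.1⟩
      set p : ℝ := sInf S with hpdef
      have hpS : p ∈ S := hSclosed.csInf_mem hSne hSbdd
      have hpc : c ≤ p := hpS.1
      have hp0 : deriv H p = 0 := hpS.2
      have hpz₀ : p ∈ Set.Ioi z₀ := lt_of_lt_of_le hcz₀ hpc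
      have hpcne : c < p := lt_of_le_of_ne hpc (by intro h; rw [← h] at hp0; exact hcneg.ne hp0)
      have hIco : ∀ x ∈ Set.Ico c p, deriv H x < 0 := by
        intro x hx
        rcases lt_or_eq_of_le (hH'le x (lt_of_lt_of_le hcz₀ hx.1)) with h | h
        · exact h
        · exact absurd (csInf_le hSbdd ⟨hx.1, h⟩) (not_le.2 hx.2)
      have hHp : 0 < H p := hpos p (Set.mem_Ici.2 (le_of_lt hpz₀))
      set M : ℝ := C / H p with hMdef
      have hMpos : 0 < M := div_pos hCpos hHp
      -- Lipschitz estimate for (deriv H)⁻¹ on Ico c p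
      have hlip : ∀ y ∈ Set.Ico c p,
          ‖(deriv H y)⁻¹ - (deriv H c)⁻¹‖ ≤ M * ‖y - c‖ := by
        intro y hy
        have hconv : Convex ℝ (Set.Ico c p) := convex_Ico c p
        have hd : ∀ x ∈ Set.Ico c p, HasDerivWithinAt (fun t => (deriv H t)⁻¹)
            (-(deriv (deriv H) x) / (deriv H x) ^ 2) (Set.Ico c p) x := fun x hx =>
          (((hH'd x (lt_of_lt_of_le hcz₀ hx.1)).inv (hIco x hx).ne)).hasDerivWithinAt
        have hbd' : ∀ x ∈ Set.Ico c p,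
            ‖-(deriv (deriv H) x) / (deriv H x) ^ 2‖ ≤ M := by
          intro x hx
          have hxz₁ : z₁ ≤ x := le_trans hc.1.le hx.1
          have hb := hbound x hxz₁
          have hHx : 0 < H x := hpos x (le_trans hz₁gt.le hxz₁)
          have hHpx : H p ≤ H x := by
            rcases eq_or_lt_of_le hx.2.le with h | h
            · exact le_of_eq (by rw [h])
            · exact (hanti (le_trans hz₁gt.le hxz₁) (Set.mem_Ici.2 (le_of_lt hpz₀)) h).le
          have hsq : (0:ℝ) < (deriv H x) ^ 2 := pow_two_pos_of_ne_zero (hIco x hx).ne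
          rw [Real.norm_eq_abs, abs_div, abs_neg, abs_of_nonneg (sq_nonneg (deriv H x))]
          rw [abs_mul, abs_of_pos hHx] at hb
          have h1' : |deriv (deriv H) x| ≤ C * (deriv H x) ^ 2 / H x := by
            rw [le_div_iff₀ hHx]; linarith [hb]
          calc |deriv (deriv H) x| / (deriv H x) ^ 2
              ≤ (C * (deriv H x) ^ 2 / H x) / (deriv H x) ^ 2 := by gcongr
            _ = C / H x := by field_simp [(hIco x hx).ne]
            _ ≤ C / H p := by gcongr
        exact hconv.norm_image_sub_le_of_norm_hasDerivWithin_le hd hbd' ⟨le_rfl, hpcne⟩ hy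
      -- hence (deriv H y)⁻¹ is bounded below, so deriv H y is bounded away from 0
      set K : ℝ := (deriv H c)⁻¹ - M * (p - c) with hKdef
      have hKneg : K < 0 := by
        rw [hKdef]
        have h1' : (deriv H c)⁻¹ < 0 := inv_lt_zero.2 hcneg
        have h2' : 0 < M * (p - c) := mul_pos hMpos (sub_pos.2 hpcne)
        linarith
      have hbd : ∀ y ∈ Set.Ico c p, deriv H y ≤ K⁻¹ := by
        intro y hy
        have h := hlip y hy
        rw [Real.norm_eq_abs, Real.norm_eq_abs, abs_sub_le_iff] at h
        have hyc : |y - c| = y - c := abs_of_nonneg (by linarith [hy.1])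
        have hKle : K ≤ (deriv H y)⁻¹ := by
          have h2' := h.2
          rw [hyc] at h2'
          have : M * (y - c) ≤ M * (p - c) := by
            have := hy.2
            nlinarith
          rw [hKdef]; linarith
        exact (le_inv_of_neg hKneg (hIco y hy)).1 hKle
      have hcontp : Tendsto (deriv H) (𝓝[<] p) (𝓝 0) := by
        have : ContinuousAt (deriv H) p :=
          hH'cont.continuousAt (hopen.mem_nhds hpz₀)
        rw [← hp0]
        exact this.continuousWithinAt.tendsto
      have hle0 : (0:ℝ) ≤ K⁻¹ := by
        refine le_of_tendsto hcontp ?_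
        filter_upwards [Ioo_mem_nhdsLT hpcne] with y hy
        exact hbd y ⟨hy.1.le, hy.2⟩
      exact absurd hle0 (not_le.2 (inv_lt_zero.2 hKneg))
    exact fun z hz => hmain z (by linarith [hc.2])
  set z₂ : ℝ := z₁ + 1 with hz₂def
  have hz₂gt : z₀ < z₂ := by rw [hz₂def]; linarith
  -- the tail integral F and its properties
  set F : ℝ → ℝ := fun z => ∫ y in Set.Ioi z, H y with hFdef
  have hintIoi : IntegrableOn H (Set.Ioi z₀) := hint.mono_set Set.Ioi_subset_Ici_self
  set I : ℝ := ∫ y in Set.Ioi z₀, H y with hIdef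
  have hkey : ∀ u ∈ Set.Ioi z₀, F u = I - ∫ t in z₀..u, H t := by
    intro u hu
    have hsplit : Set.Ioc z₀ u ∪ Set.Ioi u = Set.Ioi z₀ := Set.Ioc_union_Ioi_eq_Ioi hu.le
    have hdisj : Disjoint (Set.Ioc z₀ u) (Set.Ioi u) := by
      rw [Set.disjoint_left]; rintro x hx1 hx2; exact absurd hx1.2 (not_le.2 hx2)
    have h := MeasureTheory.setIntegral_union hdisj measurableSet_Ioi
      (hintIoi.mono_set (by rw [← hsplit]; exact Set.subset_union_left))
      (hintIoi.mono_set (by rw [← hsplit]; exact Set.subset_union_right))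
    rw [hsplit] at h
    rw [intervalIntegral.integral_of_le hu.le]
    rw [hIdef, h]
    ring
  have hF0 : Tendsto F atTop (𝓝 0) := by
    have hti := MeasureTheory.intervalIntegral_tendsto_integral_Ioi z₀ hintIoi tendsto_id
    have h' : Tendsto (fun u => I - ∫ t in z₀..u, H t) atTop (𝓝 (I - I)) :=
      tendsto_const_nhds.sub hti
    rw [sub_self] at h'
    apply h'.congr'
    filter_upwards [eventually_gt_atTop z₀] with u hu
    exact (hkey u hu).symm
  have hFd : ∀ z ∈ Set.Ioi z₀, HasDerivAt F (-(H z)) z := by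
    intro z hz
    have hmeas : StronglyMeasurableAtFilter H (𝓝 z) volume :=
      hC2'.continuousOn.stronglyMeasurableAtFilter hopen z hz
    have hcont : ContinuousAt H z := hC2.continuousOn.continuousAt (Ici_mem_nhds hz)
    have hii : IntervalIntegrable H volume z₀ z := by
      rw [intervalIntegrable_iff, Set.uIoc_of_le (le_of_lt hz)]
      exact hintIoi.mono_set Set.Ioc_subset_Ioi_self
    have hFTC := intervalIntegral.integral_hasDerivAt_right hii hmeas hcont
    have h' : HasDerivAt (fun u => I - ∫ t in z₀..u, H t) (-(H z)) z := by
      simpa using hFTC.const_sub I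
    apply h'.congr_of_eventuallyEq
    filter_upwards [hopen.mem_nhds hz] with u hu
    exact hkey u hu
  -- the function G and its derivative
  set G : ℝ → ℝ := fun z => H z ^ 2 / (-(deriv H z)) with hGdef
  have hGeq : G = fun z => -(H z ^ 2 / deriv H z) := by
    rw [hGdef]; funext u; rw [div_neg]
  have hG0 : Tendsto G atTop (𝓝 0) := by
    rw [hGeq]
    simpa using h1.neg
  set G' : ℝ → ℝ := fun z =>
    -((2 * H z * deriv H z * deriv H z - H z ^ 2 * deriv (deriv H) z) / (deriv H z) ^ 2)
    with hG'def
  have hGd : ∀ z ≥ z₂, HasDerivAt G (G' z) z := by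
    intro z hz
    have hz₀z : z ∈ Set.Ioi z₀ := lt_of_lt_of_le hz₂gt hz
    have hne : deriv H z ≠ 0 := (hneg z hz).ne
    have hu : HasDerivAt (fun w => H w ^ 2) (2 * H z * deriv H z) z := by
      have := (hHd z hz₀z).fun_pow 2
      simpa [mul_comm, mul_assoc] using this
    have hdiv := hu.fun_div (hH'd z hz₀z) hne
    have h' : HasDerivAt (fun w => -(H w ^ 2 / deriv H w)) (G' z) z := by
      simpa [hG'def] using hdiv.fun_neg
    rw [hGeq]
    exact h'
  -- eventual nonvanishing of 2 - r where r = H·H''/(H')²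
  have h2a : (2:ℝ) - a ≠ 0 := sub_ne_zero.2 (Ne.symm ha)
  have habs2a : 0 < |2 - a| := abs_pos.2 h2a
  obtain ⟨z₃, hz₃⟩ := Metric.tendsto_atTop.1 h2 (|2 - a| / 2) (by linarith)
  have hr_ne : ∀ z ≥ z₃, 2 - H z * deriv (deriv H) z / (deriv H z) ^ 2 ≠ 0 := by
    intro z hz h0
    have he : H z * deriv (deriv H) z / (deriv H z) ^ 2 = 2 := by linarith
    have hd := hz₃ z hz
    rw [he, Real.dist_eq] at hd
    linarith
  set z₄ : ℝ := max z₂ z₃ with hz₄def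
  have hG'form : ∀ z ≥ z₄, G' z =
      -(H z * (2 - H z * deriv (deriv H) z / (deriv H z) ^ 2)) := by
    intro z hz
    have hne : deriv H z ≠ 0 := (hneg z (le_trans (le_max_left _ _) hz)).ne
    rw [hG'def]
    field_simp
  have hg'ne : ∀ z ≥ z₄, G' z ≠ 0 := by
    intro z hz
    rw [hG'form z hz]
    have hHz : 0 < H z := hpos z (by
      have : z₂ ≤ z := le_trans (le_max_left _ _) hz
      exact le_of_lt (lt_of_lt_of_le hz₂gt this))
    exact neg_ne_zero.2 (mul_ne_zero hHz.ne'
      (hr_ne z (le_trans (le_max_right _ _) hz)))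
  -- the limit of f'/g'
  have hdiv : Tendsto (fun z => (-(H z)) / G' z) atTop (𝓝 (1 / (2 - a))) := by
    have hlim : Tendsto (fun z => 1 / (2 - H z * deriv (deriv H) z / (deriv H z) ^ 2))
        atTop (𝓝 (1 / (2 - a))) :=
      Tendsto.div tendsto_const_nhds (tendsto_const_nhds.sub h2) h2a
    apply hlim.congr'
    filter_upwards [eventually_ge_atTop z₄] with z hz
    have hHz : 0 < H z := hpos z (by
      have : z₂ ≤ z := le_trans (le_max_left _ _) hz
      exact le_of_lt (lt_of_lt_of_le hz₂gt this))
    have hrne := hr_ne z (le_trans (le_max_right _ _) hz)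
    rw [hG'form z hz, neg_div_neg_eq]
    field_simp
  -- apply L'Hôpital's rule
  have hFf : ∀ᶠ z in atTop, HasDerivAt F (-(H z)) z := by
    filter_upwards [eventually_gt_atTop z₀] with z hz
    exact hFd z hz
  have hGg : ∀ᶠ z in atTop, HasDerivAt G (G' z) z := by
    filter_upwards [eventually_ge_atTop z₂] with z hz
    exact hGd z hz
  have hg'ne' : ∀ᶠ z in atTop, G' z ≠ 0 := by
    filter_upwards [eventually_ge_atTop z₄] with z hz
    exact hg'ne z hz
  exact HasDerivAt.lhopital_zero_atTop hFf hGg hg'ne' hF0 hG0 hdiv
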